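/- Let c ≥ 2 and let h : ℝ^d → ℝ^c be such that each component h_i is Lipschitz continuous with respect to a fixed norm ‖·‖ on ℝ^d, with Lipschitz constant L_i > 0. Fix x ∈ ℝ^d, let y satisfy h_y(x) ≥ h_i(x) for all i, and let μ ≥ 0. Then for every δ ∈ ℝ^d with ‖δ‖ ≤ (h_y(x) − h_i(x) − μ)/(L_y + L_i) for all i ≠ y, it holds that h_y(x+δ) ≥ h_i(x+δ) + μ for all i ≠ y; i.e., h is certifiably robust at x with margin μ and radius min_{i≠y} (h_y(x) − h_i(x) − μ)/(L_y + L_i). -/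
import Mathlib

/-- **Lipschitz classifiers are certifiably robust with margin.**
If every component `h_i` is Lipschitz with constant `L_i > 0` w.r.t. a fixed norm `N`,
`y = argmax_i h_i(x)`, and `μ ≥ 0`, then `h` is certifiably robust at `x` with margin `μ`
and radius `min_{i ≠ y} (h_y(x) - h_i(x) - μ) / (L_y + L_i)`. -/
theorem lipschitz_certified_robust_with_margin
    {d c : ℕ} (hc : 2 ≤ c)
    (N : (Fin d → ℝ) → ℝ)                      -- a fixed norm on ℝ^d
    (h : (Fin d → ℝ) → Fin c → ℝ)
    (L : Fin c → ℝ) (hL : ∀ i, 0 < L i)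
    (hLip : ∀ i : Fin c, ∀ x x' : Fin d → ℝ, |h x' i - h x i| ≤ L i * N (x' - x))
    (x : Fin d → ℝ) (y : Fin c) (hy : ∀ i, h x i ≤ h x y)
    (μ : ℝ) (hμ : 0 ≤ μ) :
    ∀ δ : Fin d → ℝ,
      (∀ i, i ≠ y → N δ ≤ (h x y - h x i - μ) / (L y + L i)) →
      ∀ i, i ≠ y → h (x + δ) i + μ ≤ h (x + δ) y := by
  intro δ hδ i hi
  have hsum : 0 < L y + L i := by have := hL y; have := hL i; linarith
  have hgap : (L y + L i) * N δ ≤ h x y - h x i - μ := by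
    have := hδ i hi
    calc (L y + L i) * N δ ≤ (L y + L i) * ((h x y - h x i - μ) / (L y + L i)) := by
          exact mul_le_mul_of_nonneg_left this hsum.le
      _ = h x y - h x i - μ := by field_simp
  have hNδ : x + δ - x = δ := by abel
  have h1 := hLip y x (x + δ)
  have h2 := hLip i x (x + δ)
  rw [hNδ] at h1 h2
  have h1' := abs_le.mp h1
  have h2' := abs_le.mp h2
  nlinarith [h1'.1, h1'.2, h2'.1, h2'.2]
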